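/- With S, B, B̂ as above, B̂ maps the set of L-chains over S into the set of π'-free L-chains, and B̂ restricted to L-chains is idempotent: B̂ fixes every π'-free L-chain. -/

import Mathlib

open Pointwise

/-- Multiplication of an element of a semigroup `M` by an element of `M¹ = M` with an
adjoined identity (modelled as `Option M`, `none` being the identity `I`). -/
def hmul {M : Type*} [Mul M] (h : M) : Option M → M := fun s => s.elim h (fun u => h * u)

/-- Multiplication in `M¹` (modelled as `Option M`). -/
def omul {M : Type*} [Mul M] : Option M → Option M → Option M
  | none, t => t
  | some a, none => some a
  | some a, some b => some (a * b)

/-- `mpow a n = aⁿ` for `n ≥ 1` (with the junk value `mpow a 0 = a`). -/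
def mpow {M : Type*} [Mul M] (a : M) : ℕ → M
  | 0 => a
  | 1 => a
  | n+2 => mpow a (n+1) * a

/-- Green's preorder `a ≤_L b` iff `a ∈ M¹ b`. -/
def leL {M : Type*} [Mul M] (a b : M) : Prop := a = b ∨ ∃ u, a = u * b
/-- Green's preorder `a ≤_R b` iff `a ∈ b M¹`. -/
def leR {M : Type*} [Mul M] (a b : M) : Prop := a = b ∨ ∃ u, a = b * u
/-- Green's `L`-equivalence. -/
def eqL {M : Type*} [Mul M] (a b : M) : Prop := leL a b ∧ leL b a
/-- Green's `R`-equivalence. -/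
def eqR {M : Type*} [Mul M] (a b : M) : Prop := leR a b ∧ leR b a
/-- Green's `H`-equivalence. -/
def eqH {M : Type*} [Mul M] (a b : M) : Prop := eqL a b ∧ eqR a b
/-- `a <_H b` : `a ≤_L b`, `a ≤_R b`, but `a` is not `H`-equivalent to `b`. -/
def ltH {M : Type*} [Mul M] (a b : M) : Prop := leL a b ∧ leR a b ∧ ¬ eqH a b

/-- The `H`-class of `a`, as a type. -/
def HclsT {M : Type*} [Mul M] (a : M) := {x : M // eqH x a}

/-- The (right) Schützenberger group of the `H`-class of `a`: the set of transformations of the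
`H`-class of `a` induced by right multiplication by elements of the right stabilizer in `M¹`. -/
def gammaR {M : Type*} [Mul M] (a : M) : Set (HclsT a → HclsT a) :=
  {f | ∃ s : Option M, (∀ h : HclsT a, eqH (hmul h.1 s) a) ∧
        ∀ h : HclsT a, (f h).1 = hmul h.1 s}

/-- An element is `π'`-free if the Schützenberger group of its (`J`-class, equivalently its)
`H`-class is a `π`-group: every prime dividing its order lies in `π`. -/
def piFree {M : Type*} [Mul M] (π : Set ℕ) (a : M) : Prop :=
  ∀ p : ℕ, p.Prime → p ∣ (gammaR a).ncard → p ∈ π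

/-- A preblowup operator on a finite semigroup `S` realized as a subsemigroup of `P(T)` via an
injective semigroup embedding `ι : S → Set T`. -/
def IsPreblowupE (π : Set ℕ) {T : Type*} {S : Type*} [Semigroup T] [Semigroup S]
    (ι : S → Set T) (B : S → S) (m : S → Option S) : Prop :=
  (∀ s, piFree π s → B s = s) ∧
  (∀ s, ¬ piFree π s → ltH (B s) s) ∧
  (∀ s, ι s ⊆ ι (B s)) ∧
  (∀ s, B s = hmul s (m s)) ∧
  (∀ s s', eqL s s' → m s = m s')

/-- An `L`-chain `(s_n, …, s_1)` (with `s_{i+1} ≤_L s_i`), encoded as the list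
`[s_1, s_2, …, s_n]` whose head is the first (rightmost) letter. -/
def isChain {S : Type*} [Mul S] (l : List S) : Prop := List.Chain' (fun a b => leL b a) l

/-- A flag: a strict `L`-chain. -/
def isFlag {S : Type*} [Mul S] (l : List S) : Prop :=
  List.Chain' (fun a b => leL b a ∧ ¬ leL a b) l

/-- Elementary reduction `(…, s', s, …) → (…, s', …)` when `s' L s`: delete the earlier-read
entry `s` of two adjacent `L`-equivalent entries, keeping `s'`. -/
def rstep {S : Type*} [Mul S] (l l' : List S) : Prop :=
  ∃ (l₁ : List S) (s s' : S) (l₂ : List S),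
    eqL s' s ∧ l = l₁ ++ s :: s' :: l₂ ∧ l' = l₁ ++ s' :: l₂

/-- Henckell's formula: `B̂(ε) = ε`, `B̂(b⃗·s) = B̂(b⃗Δ_{m_s}) · B(s)`, where strings
`(x_n, …, x_1)` are encoded as lists `[x_1, …, x_n]` (head = rightmost letter) and
`Δ_u` multiplies every coordinate on the right by `u ∈ S¹`. -/
def Bhat {S : Type*} [Semigroup S] (B : S → S) (m : S → Option S) : List S → List S
  | [] => []
  | s :: b => B s :: Bhat B m (b.map (fun x => hmul x (m s)))
termination_by l => l.length
decreasing_by simp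

section Aux

variable {S : Type*} [Semigroup S]

lemma leL_refl' (a : S) : leL a a := Or.inl rfl

lemma leL_trans' {a b c : S} (h1 : leL a b) (h2 : leL b c) : leL a c := by
  rcases h1 with rfl | ⟨u, rfl⟩ <;> rcases h2 with rfl | ⟨v, rfl⟩
  · exact Or.inl rfl
  · exact Or.inr ⟨v, rfl⟩
  · exact Or.inr ⟨u, rfl⟩
  · exact Or.inr ⟨u * v, (mul_assoc u v c).symm⟩

lemma hmul_mul' (u a : S) (t : Option S) : hmul (u * a) t = u * hmul a t := by
  cases t with
  | none => rfl
  | some w => exact mul_assoc u a w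

lemma leL_hmul' {a b : S} (t : Option S) (h : leL a b) : leL (hmul a t) (hmul b t) := by
  rcases h with rfl | ⟨u, rfl⟩
  · exact Or.inl rfl
  · exact Or.inr ⟨u, hmul_mul' u b t⟩

lemma chain_tail_le' {s : S} {b : List S} (h : isChain (s :: b)) :
    ∀ x ∈ b, leL x s := by
  induction b generalizing s with
  | nil => simp
  | cons t rest ih =>
    rw [isChain, List.Chain', List.isChain_cons_cons] at h
    intro x hx
    rw [List.mem_cons] at hx
    rcases hx with rfl | hx
    · exact h.1
    · exact leL_trans' (ih h.2 x hx) h.1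

lemma Bhat_cons' (B : S → S) (m : S → Option S) (s : S) (b : List S) :
    Bhat B m (s :: b) = B s :: Bhat B m (b.map (fun x => hmul x (m s))) := by
  rw [Bhat]

lemma B_piFree' (π : Set ℕ) (B : S → S) (hB2 : ∀ s, ¬ piFree π s → ltH (B s) s)
    (hidem : ∀ s, B (B s) = B s) (s : S) : piFree π (B s) := by
  by_contra h
  have h' := hB2 _ h
  rw [hidem] at h'
  exact h'.2.2 ⟨⟨leL_refl' _, leL_refl' _⟩, ⟨Or.inl rfl, Or.inl rfl⟩⟩

lemma leL_B' (π : Set ℕ) (B : S → S) (hB1 : ∀ s, piFree π s → B s = s)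
    (hB2 : ∀ s, ¬ piFree π s → ltH (B s) s) (s : S) : leL (B s) s := by
  by_cases h : piFree π s
  · rw [hB1 s h]; exact leL_refl' s
  · exact (hB2 s h).1

lemma Bhat_chain' (π : Set ℕ) (B : S → S) (m : S → Option S)
    (hB1 : ∀ s, piFree π s → B s = s)
    (hB2 : ∀ s, ¬ piFree π s → ltH (B s) s)
    (hB4 : ∀ s, B s = hmul s (m s)) :
    ∀ (n : ℕ) (l : List S), l.length ≤ n → isChain l → isChain (Bhat B m l) := by
  intro n
  induction n with
  | zero =>
    intro l hl _
    have : l = [] := List.eq_nil_of_length_eq_zero (Nat.le_zero.mp hl)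
    subst this
    rw [Bhat]
    exact List.isChain_nil
  | succ n ih =>
    intro l hl hc
    match l with
    | [] => rw [Bhat]; exact List.isChain_nil
    | [s] =>
      rw [Bhat_cons']
      simp [Bhat, isChain, List.Chain']
    | s :: t :: rest =>
      rw [isChain, List.Chain', List.isChain_cons_cons] at hc
      have hts : leL t s := hc.1
      have hcb : isChain ((t :: rest).map (fun x => hmul x (m s))) := by
        rw [isChain, List.Chain', List.isChain_map]
        exact List.IsChain.imp (fun a b h => leL_hmul' (m s) h) hc.2
      rw [Bhat_cons', isChain, List.Chain', List.isChain_cons]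
      constructor
      · intro y hy
        rw [List.map_cons, Bhat_cons', List.head?_cons, Option.mem_some_iff] at hy
        subst hy
        have h1 : leL (B (hmul t (m s))) (hmul t (m s)) := leL_B' π B hB1 hB2 _
        have h2 : leL (hmul t (m s)) (B s) := by
          rw [hB4 s]; exact leL_hmul' (m s) hts
        exact leL_trans' h1 h2
      · have hlen : ((t :: rest).map (fun x => hmul x (m s))).length ≤ n := by
          simpa using Nat.succ_le_succ_iff.mp hl
        exact ih _ hlen hcb

lemma Bhat_mem_piFree' (π : Set ℕ) (B : S → S) (m : S → Option S)
    (hB2 : ∀ s, ¬ piFree π s → ltH (B s) s)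
    (hidem : ∀ s, B (B s) = B s) :
    ∀ (n : ℕ) (l : List S), l.length ≤ n → ∀ x ∈ Bhat B m l, piFree π x := by
  intro n
  induction n with
  | zero =>
    intro l hl x hx
    have : l = [] := List.eq_nil_of_length_eq_zero (Nat.le_zero.mp hl)
    subst this
    rw [Bhat] at hx
    simp at hx
  | succ n ih =>
    intro l hl x hx
    match l with
    | [] => rw [Bhat] at hx; simp at hx
    | s :: b =>
      rw [Bhat_cons'] at hx
      rcases List.mem_cons.mp hx with rfl | hx
      · exact B_piFree' π B hB2 hidem s
      · have hlen : (b.map (fun x => hmul x (m s))).length ≤ n := by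
          simpa using Nat.succ_le_succ_iff.mp hl
        exact ih _ hlen x hx

lemma Bhat_fix' (π : Set ℕ) (B : S → S) (m : S → Option S)
    (hB1 : ∀ s, piFree π s → B s = s)
    (hB4 : ∀ s, B s = hmul s (m s)) :
    ∀ l : List S, isChain l → (∀ x ∈ l, piFree π x) → Bhat B m l = l := by
  intro l
  induction l with
  | nil => intro _ _; rw [Bhat]
  | cons s b ih =>
    intro hc hpf
    have hBs : B s = s := hB1 s (hpf s List.mem_cons_self)
    have hfix : ∀ x ∈ b, hmul x (m s) = x := by
      intro x hx
      rcases chain_tail_le' hc x hx with rfl | ⟨u, rfl⟩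
      · rw [← hB4, hBs]
      · rw [hmul_mul', ← hB4, hBs]
    have hmap : b.map (fun x => hmul x (m s)) = b :=
      (List.map_congr_left hfix).trans (List.map_id b)
    rw [Bhat_cons', hmap, hBs,
      ih (List.IsChain.tail hc) (fun x hx => hpf x (List.mem_cons_of_mem s hx))]

end Aux

/-- `B̂` maps `L`-chains over `S` to `π'`-free `L`-chains, fixes every `π'`-free `L`-chain, and
hence is idempotent on `L`-chains. -/
theorem stmt_15 (π : Set ℕ) {T S : Type*} [Semigroup T] [Fintype T] [Semigroup S] [Fintype S]
    (ι : S → Set T) (hιinj : Function.Injective ι) (hιmul : ∀ a b, ι (a * b) = ι a * ι b)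
    (B : S → S) (m : S → Option S) (hpre : IsPreblowupE π ι B m)
    (hidem : ∀ s, B (B s) = B s) :
    (∀ l : List S, isChain l →
      isChain (Bhat B m l) ∧ ∀ x ∈ Bhat B m l, piFree π x) ∧
    (∀ l : List S, isChain l → (∀ x ∈ l, piFree π x) → Bhat B m l = l) ∧
    (∀ l : List S, isChain l → Bhat B m (Bhat B m l) = Bhat B m l) := by
  obtain ⟨hB1, hB2, _, hB4, _⟩ := hpre
  have hchain : ∀ l : List S, isChain l → isChain (Bhat B m l) :=
    fun l hc => Bhat_chain' π B m hB1 hB2 hB4 l.length l le_rfl hc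
  have hfree : ∀ l : List S, ∀ x ∈ Bhat B m l, piFree π x :=
    fun l => Bhat_mem_piFree' π B m hB2 hidem l.length l le_rfl
  refine ⟨fun l hc => ⟨hchain l hc, hfree l⟩, Bhat_fix' π B m hB1 hB4, fun l hc => ?_⟩
  exact Bhat_fix' π B m hB1 hB4 _ (hchain l hc) (hfree l)
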